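/- arXiv:0711.3715 — 2 statements merged into one kernel-verified Lean document; each statement's English description precedes it below -/
import Mathlib

section
/- For any density operators ρ, σ, ξ on a finite-dimensional complex Hilbert space, F(ρ,σ)² + F(σ,ξ)² ≤ 1 + F(ρ,ξ), where F denotes the fidelity F(ρ,σ) = tr√(√ρ σ √ρ). -/
open scoped ComplexOrder

open scoped Classical in
noncomputable def matSqrt {n : ℕ} (A : Matrix (Fin n) (Fin n) ℂ) : Matrix (Fin n) (Fin n) ℂ :=
  if h : A.PosSemidef then
    (h.1.eigenvectorUnitary : Matrix (Fin n) (Fin n) ℂ) *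
      Matrix.diagonal ((↑) ∘ (Real.sqrt ·) ∘ h.1.eigenvalues) *
      (star h.1.eigenvectorUnitary : Matrix (Fin n) (Fin n) ℂ)
  else 0

/-- Fidelity F(ρ,σ) = tr √(√ρ σ √ρ). -/
noncomputable def fid {n : ℕ} (ρ σ : Matrix (Fin n) (Fin n) ℂ) : ℝ :=
  ((matSqrt (matSqrt ρ * σ * matSqrt ρ)).trace).re

open scoped InnerProductSpace
open Matrix

noncomputable def Matrix.PosSemidef.sqrt {n : ℕ} {A : Matrix (Fin n) (Fin n) ℂ} (h : A.PosSemidef) :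
    Matrix (Fin n) (Fin n) ℂ :=
  (h.1.eigenvectorUnitary : Matrix (Fin n) (Fin n) ℂ) *
      Matrix.diagonal ((↑) ∘ (Real.sqrt ·) ∘ h.1.eigenvalues) *
      (star h.1.eigenvectorUnitary : Matrix (Fin n) (Fin n) ℂ)

lemma herm_diag {n : ℕ} {A : Matrix (Fin n) (Fin n) ℂ} (hA : A.IsHermitian) :
    (hA.eigenvectorUnitary : Matrix (Fin n) (Fin n) ℂ)ᴴ * A * (hA.eigenvectorUnitary : Matrix (Fin n) (Fin n) ℂ)
      = diagonal (RCLike.ofReal ∘ hA.eigenvalues) := by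
  have hs := hA.spectral_theorem
  rw [Unitary.conjStarAlgAut_apply] at hs
  have h1 : (hA.eigenvectorUnitary : Matrix (Fin n) (Fin n) ℂ)ᴴ * hA.eigenvectorUnitary = 1 :=
    Matrix.mem_unitaryGroup_iff'.mp hA.eigenvectorUnitary.2
  have h2 : star (hA.eigenvectorUnitary : Matrix (Fin n) (Fin n) ℂ) = (hA.eigenvectorUnitary : Matrix (Fin n) (Fin n) ℂ)ᴴ := rfl
  calc _ = (hA.eigenvectorUnitary : Matrix (Fin n) (Fin n) ℂ)ᴴ * ((hA.eigenvectorUnitary : Matrix (Fin n) (Fin n) ℂ) * diagonal (RCLike.ofReal ∘ hA.eigenvalues) * star (hA.eigenvectorUnitary : Matrix (Fin n) (Fin n) ℂ)) * (hA.eigenvectorUnitary : Matrix (Fin n) (Fin n) ℂ) :=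
        congrArg (fun M => (hA.eigenvectorUnitary : Matrix (Fin n) (Fin n) ℂ)ᴴ * M * (hA.eigenvectorUnitary : Matrix (Fin n) (Fin n) ℂ)) hs
    _ = _ := by
      simp only [h2, Matrix.mul_assoc, h1, Matrix.mul_one]
      rw [← Matrix.mul_assoc, h1, Matrix.one_mul]

lemma Matrix.PosSemidef.posSemidef_sqrt {n : ℕ} {A : Matrix (Fin n) (Fin n) ℂ} (h : A.PosSemidef) :
    h.sqrt.PosSemidef := by
  unfold Matrix.PosSemidef.sqrt
  apply Matrix.PosSemidef.mul_mul_conjTranspose_same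
  rw [posSemidef_diagonal_iff]
  intro i
  simp only [Function.comp]
  exact_mod_cast Real.sqrt_nonneg _

lemma Matrix.PosSemidef.sqrt_mul_self {n : ℕ} {A : Matrix (Fin n) (Fin n) ℂ} (h : A.PosSemidef) :
    h.sqrt * h.sqrt = A := by
  have h1 : (h.1.eigenvectorUnitary : Matrix (Fin n) (Fin n) ℂ)ᴴ * h.1.eigenvectorUnitary = 1 :=
    Matrix.mem_unitaryGroup_iff'.mp h.1.eigenvectorUnitary.2
  have h2 : star (h.1.eigenvectorUnitary : Matrix (Fin n) (Fin n) ℂ) = (h.1.eigenvectorUnitary : Matrix (Fin n) (Fin n) ℂ)ᴴ := rfl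
  unfold Matrix.PosSemidef.sqrt
  conv_rhs => rw [h.1.spectral_theorem, Unitary.conjStarAlgAut_apply]
  simp only [h2, Matrix.mul_assoc]
  rw [← Matrix.mul_assoc (h.1.eigenvectorUnitary : Matrix (Fin n) (Fin n) ℂ)ᴴ, h1, Matrix.one_mul,
    ← Matrix.mul_assoc (diagonal _) (diagonal _), diagonal_mul_diagonal]
  have hd : ∀ i, ((Real.sqrt (h.1.eigenvalues i) : ℂ)) * (Real.sqrt (h.1.eigenvalues i) : ℂ)
      = (h.1.eigenvalues i : ℂ) := fun i => by
    rw [← Complex.ofReal_mul, Real.mul_self_sqrt (h.eigenvalues_nonneg i)]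
  simp only [Function.comp, hd]
  rfl


lemma scalar_key {x y z : ℝ} (hx0 : 0 ≤ x) (hx1 : x ≤ 1) (hy0 : 0 ≤ y) (hy1 : y ≤ 1)
    (hz : 0 ≤ z)
    (h : x * y - Real.sqrt (1 - x ^ 2) * Real.sqrt (1 - y ^ 2) ≤ z) :
    x ^ 2 + y ^ 2 ≤ 1 + z := by
  rcases le_or_gt (x ^ 2 + y ^ 2) 1 with hc | hc
  · linarith
  · have h1 : (0:ℝ) ≤ 1 - x ^ 2 := by nlinarith
    have h2 : (0:ℝ) ≤ 1 - y ^ 2 := by nlinarith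
    have hrhs : (0:ℝ) ≤ 1 + x * y - x ^ 2 - y ^ 2 := by
      nlinarith [sq_nonneg (x - y), sq_nonneg (x + y)]
    have hs : Real.sqrt (1 - x ^ 2) * Real.sqrt (1 - y ^ 2) ≤ 1 + x * y - x ^ 2 - y ^ 2 := by
      rw [← Real.sqrt_mul h1]
      have hsq : (1 - x ^ 2) * (1 - y ^ 2) ≤ (1 + x * y - x ^ 2 - y ^ 2) ^ 2 := by
        nlinarith [sq_nonneg (x - y), mul_nonneg (sq_nonneg (x - y)) (by linarith : (0:ℝ) ≤ x ^ 2 + y ^ 2 - 1)]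
      calc Real.sqrt ((1 - x ^ 2) * (1 - y ^ 2)) ≤ Real.sqrt ((1 + x * y - x ^ 2 - y ^ 2) ^ 2) :=
            Real.sqrt_le_sqrt hsq
        _ = 1 + x * y - x ^ 2 - y ^ 2 := Real.sqrt_sq hrhs
    linarith

lemma inner_ineq {E : Type*} [NormedAddCommGroup E] [InnerProductSpace ℂ E]
    (u v w : E) (hu : ‖u‖ = 1) (hv : ‖v‖ = 1) (hw : ‖w‖ = 1)
    {x y : ℝ} (hx0 : 0 ≤ x) (hy0 : 0 ≤ y)
    (hvu : ⟪v, u⟫_ℂ = (x : ℂ)) (hvw : ⟪v, w⟫_ℂ = (y : ℂ)) :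
    x * y - Real.sqrt (1 - x ^ 2) * Real.sqrt (1 - y ^ 2) ≤ ‖⟪u, w⟫_ℂ‖ := by
  have hvv : ⟪v, v⟫_ℂ = 1 := by
    have := inner_self_eq_norm_sq (𝕜 := ℂ) v
    rw [hv] at this
    have him := inner_self_im (𝕜 := ℂ) v
    apply Complex.ext
    · simpa using this
    · exact inner_self_im (𝕜 := ℂ) v
  have huv : ⟪u, v⟫_ℂ = (x : ℂ) := by
    rw [← inner_conj_symm, hvu]
    simp
  have hwv : ⟪w, v⟫_ℂ = (y : ℂ) := by
    rw [← inner_conj_symm, hvw]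
    simp
  set p : E := u - (x : ℂ) • v with hp
  set q : E := w - (y : ℂ) • v with hq
  have hpq : ⟪p, q⟫_ℂ = ⟪u, w⟫_ℂ - (x : ℂ) * y := by
    rw [hp, hq]
    simp only [inner_sub_left, inner_sub_right, inner_smul_left, inner_smul_right]
    rw [hvv, huv, hvw]
    simp only [Complex.conj_ofReal]
    ring
  have hppc : ⟪p, p⟫_ℂ = ((1 - x ^ 2 : ℝ) : ℂ) := by
    rw [hp]
    simp only [inner_sub_left, inner_sub_right, inner_smul_left, inner_smul_right]
    rw [hvv, huv, hvu]
    have huu : ⟪u, u⟫_ℂ = 1 := by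
      have h2 := inner_self_eq_norm_sq (𝕜 := ℂ) u
      rw [hu] at h2
      apply Complex.ext
      · simpa using h2
      · exact inner_self_im (𝕜 := ℂ) u
    rw [huu]
    simp only [Complex.conj_ofReal]
    push_cast
    ring
  have hqqc : ⟪q, q⟫_ℂ = ((1 - y ^ 2 : ℝ) : ℂ) := by
    rw [hq]
    simp only [inner_sub_left, inner_sub_right, inner_smul_left, inner_smul_right]
    rw [hvv, hwv, hvw]
    have hww : ⟪w, w⟫_ℂ = 1 := by
      have h2 := inner_self_eq_norm_sq (𝕜 := ℂ) w
      rw [hw] at h2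
      apply Complex.ext
      · simpa using h2
      · exact inner_self_im (𝕜 := ℂ) w
    rw [hww]
    simp only [Complex.conj_ofReal]
    push_cast
    ring
  have hnp : ‖p‖ = Real.sqrt (1 - x ^ 2) := by
    have h1 : ‖p‖ ^ 2 = 1 - x ^ 2 := by
      rw [← inner_self_eq_norm_sq (𝕜 := ℂ), hppc]
      exact Complex.ofReal_re _
    rw [← h1, Real.sqrt_sq (norm_nonneg p)]
  have hnq : ‖q‖ = Real.sqrt (1 - y ^ 2) := by
    have h1 : ‖q‖ ^ 2 = 1 - y ^ 2 := by
      rw [← inner_self_eq_norm_sq (𝕜 := ℂ), hqqc]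
      exact Complex.ofReal_re _
    rw [← h1, Real.sqrt_sq (norm_nonneg q)]
  have hcs : ‖⟪u, w⟫_ℂ - (x : ℂ) * y‖ ≤ Real.sqrt (1 - x ^ 2) * Real.sqrt (1 - y ^ 2) := by
    rw [← hpq, ← hnp, ← hnq]
    exact norm_inner_le_norm p q
  have htri : (x : ℝ) * y ≤ ‖⟪u, w⟫_ℂ‖ + ‖⟪u, w⟫_ℂ - (x : ℂ) * y‖ := by
    have h0 : ((x : ℂ) * y) = ⟪u, w⟫_ℂ - (⟪u, w⟫_ℂ - (x : ℂ) * y) := by ring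
    calc (x : ℝ) * y = ‖(x : ℂ) * y‖ := by
          rw [norm_mul, Complex.norm_of_nonneg hx0, Complex.norm_of_nonneg hy0]
      _ = ‖⟪u, w⟫_ℂ - (⟪u, w⟫_ℂ - (x : ℂ) * y)‖ := by rw [← h0]
      _ ≤ _ := by
          exact norm_sub_le _ _
  linarith


lemma exists_svd {n : ℕ} (B : Matrix (Fin n) (Fin n) ℂ) :
    ∃ X Y : Matrix (Fin n) (Fin n) ℂ, X ∈ Matrix.unitaryGroup (Fin n) ℂ ∧
      Y ∈ Matrix.unitaryGroup (Fin n) ℂ ∧ ∃ d : Fin n → ℝ, (∀ i, 0 ≤ d i) ∧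
      B = X * Matrix.diagonal (fun i => (d i : ℂ)) * Yᴴ ∧
      (Matrix.posSemidef_conjTranspose_mul_self B).sqrt
        = Y * Matrix.diagonal (fun i => (d i : ℂ)) * Yᴴ := by
  classical
  set H := Bᴴ * B with hHdef
  have hH : H.PosSemidef := Matrix.posSemidef_conjTranspose_mul_self B
  set Y : Matrix (Fin n) (Fin n) ℂ := (hH.1.eigenvectorUnitary : Matrix (Fin n) (Fin n) ℂ) with hY
  have hYu : Y ∈ Matrix.unitaryGroup (Fin n) ℂ := hH.1.eigenvectorUnitary.2
  set e : Fin n → ℝ := hH.1.eigenvalues with he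
  set d : Fin n → ℝ := fun i => Real.sqrt (e i) with hd
  have hd0 : ∀ i, 0 ≤ d i := fun i => Real.sqrt_nonneg _
  have hsqrt : hH.sqrt = Y * Matrix.diagonal (fun i => (d i : ℂ)) * Yᴴ := by
    show hH.sqrt = Y * Matrix.diagonal (fun i => (d i : ℂ)) * star Y
    rw [Matrix.PosSemidef.sqrt]
    rfl
  -- columns of B * Y
  set c : Fin n → EuclideanSpace ℂ (Fin n) := fun i => WithLp.toLp 2 (fun k => (B * Y) k i) with hc
  have hinner : ∀ i j, (inner ℂ (c i) (c j) : ℂ) = if i = j then (e i : ℂ) else 0 := by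
    intro i j
    have hdiag : Yᴴ * H * Y = Matrix.diagonal (RCLike.ofReal ∘ e) :=
      herm_diag hH.1
    have : (Yᴴ * H * Y) i j = Matrix.diagonal (RCLike.ofReal ∘ e) i j := by rw [hdiag]
    rw [Matrix.diagonal_apply] at this
    calc (inner ℂ (c i) (c j) : ℂ) = ∑ k, (starRingEnd ℂ) (c i k) * (c j k) := by
          simp [PiLp.inner_apply, RCLike.inner_apply, mul_comm]
      _ = (Yᴴ * H * Y) i j := by
          simp only [hHdef, hc]
          have h2 : Yᴴ * (Bᴴ * B) * Y = (B * Y)ᴴ * (B * Y) := by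
            rw [Matrix.conjTranspose_mul]
            noncomm_ring
          rw [h2]
          simp [Matrix.mul_apply, Matrix.conjTranspose_apply, mul_comm]
      _ = if i = j then (e i : ℂ) else 0 := by rw [this]; split <;> simp [Function.comp]
  have he0 : ∀ i, 0 ≤ e i := fun i => hH.eigenvalues_nonneg i
  have hdsq : ∀ i, (d i : ℝ) * d i = e i := fun i => Real.mul_self_sqrt (he0 i)
  set s : Set (Fin n) := {i | e i ≠ 0} with hs
  set v : Fin n → EuclideanSpace ℂ (Fin n) := fun i => ((d i : ℂ))⁻¹ • c i with hv
  have hON : Orthonormal ℂ (s.restrict v) := by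
    rw [orthonormal_iff_ite]
    rintro ⟨i, hi⟩ ⟨j, hj⟩
    have : (inner ℂ (v i) (v j) : ℂ)
        = (starRingEnd ℂ) ((d i : ℂ))⁻¹ * ((d j : ℂ))⁻¹ * inner ℂ (c i) (c j) := by
      rw [hv]
      simp only [inner_smul_left, inner_smul_right, map_inv₀]
      ring
    rw [show s.restrict v ⟨i, hi⟩ = v i from rfl, show s.restrict v ⟨j, hj⟩ = v j from rfl, this, hinner i j]
    by_cases hij : i = j
    · subst hij
      have hdne : (d i : ℝ) ≠ 0 := by
        intro h0
        exact hi (by rw [← hdsq i, h0, mul_zero])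
      simp only [if_true, eq_self_iff_true]
      have : ((d i : ℂ))⁻¹ * ((d i : ℂ))⁻¹ * (e i : ℂ) = 1 := by
        rw [← hdsq i]
        push_cast
        field_simp
      simpa using this
    · have hij' : (⟨i, hi⟩ : s) ≠ ⟨j, hj⟩ := by simp [hij]
      rw [if_neg hij, if_neg hij']
      simp
  have hcard : Module.finrank ℂ (EuclideanSpace ℂ (Fin n)) = Fintype.card (Fin n) := by
    simp
  obtain ⟨b, hb⟩ := hON.exists_orthonormalBasis_extension_of_card_eq hcard
  set X : Matrix (Fin n) (Fin n) ℂ := Matrix.of fun k i => (b i) k with hX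
  have hXu : X ∈ Matrix.unitaryGroup (Fin n) ℂ := by
    rw [Matrix.mem_unitaryGroup_iff']
    ext i j
    have hbij := (orthonormal_iff_ite (𝕜 := ℂ)).mp b.orthonormal i j
    calc (star X * X) i j = ∑ k, (starRingEnd ℂ) ((b i) k) * (b j) k := by
          simp [Matrix.mul_apply, Matrix.conjTranspose_apply, hX]
      _ = (inner ℂ (b i) (b j) : ℂ) := by simp [PiLp.inner_apply, RCLike.inner_apply, mul_comm]
      _ = (1 : Matrix (Fin n) (Fin n) ℂ) i j := by rw [hbij, Matrix.one_apply]
  have hBY : B * Y = X * Matrix.diagonal (fun i => (d i : ℂ)) := by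
    ext k i
    rw [Matrix.mul_diagonal]
    by_cases hi : e i = 0
    · have hci : c i = 0 := by
        rw [← inner_self_eq_zero (𝕜 := ℂ)]
        rw [hinner i i, if_pos rfl, hi]
        simp
      have hdi : d i = 0 := by rw [hd]; simp [hi]
      have : (B * Y) k i = c i k := rfl
      rw [this, hci, hdi]
      simp
    · have hbi : b i = v i := hb i hi
      have hdne : (d i : ℂ) ≠ 0 := by
        intro h0
        apply hi
        rw [← hdsq i]
        have : (d i : ℝ) = 0 := by exact_mod_cast h0
        rw [this, mul_zero]
      have : X k i = ((d i : ℂ))⁻¹ * c i k := by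
        rw [hX]
        show (b i) k = _
        rw [hbi, hv]
        simp
      rw [this]
      have : (B * Y) k i = c i k := rfl
      rw [this]
      field_simp
  have hYY : Y * Yᴴ = 1 := Matrix.mem_unitaryGroup_iff.mp hYu
  refine ⟨X, Y, hXu, hYu, d, hd0, ?_, hsqrt⟩
  calc B = B * (Y * Yᴴ) := by rw [hYY, mul_one]
    _ = (B * Y) * Yᴴ := by rw [mul_assoc]
    _ = X * Matrix.diagonal (fun i => (d i : ℂ)) * Yᴴ := by rw [hBY]


lemma unitary_entry_le_one {n : ℕ} {M : Matrix (Fin n) (Fin n) ℂ}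
    (hM : M ∈ Matrix.unitaryGroup (Fin n) ℂ) (i j : Fin n) : ‖M i j‖ ≤ 1 := by
  have h1 : M * Mᴴ = 1 := Matrix.mem_unitaryGroup_iff.mp hM
  have h2 : (M * Mᴴ) i i = 1 := by rw [h1, Matrix.one_apply_eq]
  have h3 : ∑ k, M i k * (starRingEnd ℂ) (M i k) = 1 := by
    rw [← h2]; simp [Matrix.mul_apply, Matrix.conjTranspose_apply]
  have h4 : ∑ k, (‖M i k‖)^2 = 1 := by
    have := congrArg Complex.re h3
    rw [Complex.re_sum, Complex.one_re] at this
    rw [← this]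
    apply Finset.sum_congr rfl
    intro k _
    rw [Complex.mul_conj]
    simp [Complex.sq_norm]
  have h5 : (‖M i j‖)^2 ≤ 1 := by
    rw [← h4]
    exact Finset.single_le_sum (f := fun k => (‖M i k‖)^2) (fun k _ => sq_nonneg _) (Finset.mem_univ j)
  nlinarith [norm_nonneg (M i j)]


lemma trace_conj_diag {n : ℕ} (Y : Matrix (Fin n) (Fin n) ℂ)
    (hY : Y ∈ Matrix.unitaryGroup (Fin n) ℂ) (d : Fin n → ℝ) :
    (Y * Matrix.diagonal (fun i => (d i : ℂ)) * Yᴴ).trace = ∑ i, (d i : ℂ) := by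
  have hYY : Yᴴ * Y = 1 := Matrix.mem_unitaryGroup_iff'.mp hY
  rw [Matrix.trace_mul_cycle, hYY, one_mul, Matrix.trace_diagonal]

lemma tnorm_exists {n : ℕ} (B : Matrix (Fin n) (Fin n) ℂ) :
    ∃ U ∈ Matrix.unitaryGroup (Fin n) ℂ,
      (Uᴴ * B).trace = (Matrix.posSemidef_conjTranspose_mul_self B).sqrt.trace := by
  obtain ⟨X, Y, hX, hY, d, hd0, hB, hsq⟩ := exists_svd B
  refine ⟨X * Yᴴ, mul_mem hX (Unitary.star_mem hY), ?_⟩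
  have h1 : (X * Yᴴ)ᴴ = Y * Xᴴ := by simp [Matrix.conjTranspose_mul]
  rw [h1, hsq]
  conv_lhs => rw [hB]
  have : Y * Xᴴ * (X * Matrix.diagonal (fun i => (d i : ℂ)) * Yᴴ)
      = Y * Matrix.diagonal (fun i => (d i : ℂ)) * Yᴴ := by
    have hXX : Xᴴ * X = 1 := Matrix.mem_unitaryGroup_iff'.mp hX
    calc Y * Xᴴ * (X * Matrix.diagonal (fun i => (d i : ℂ)) * Yᴴ)
        = Y * (Xᴴ * X) * Matrix.diagonal (fun i => (d i : ℂ)) * Yᴴ := by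
          simp only [Matrix.mul_assoc]
      _ = _ := by rw [hXX, mul_one]
  rw [this]

lemma tnorm_bound {n : ℕ} (B V : Matrix (Fin n) (Fin n) ℂ)
    (hV : V ∈ Matrix.unitaryGroup (Fin n) ℂ) :
    ‖(V * B).trace‖
      ≤ ((Matrix.posSemidef_conjTranspose_mul_self B).sqrt.trace).re := by
  obtain ⟨X, Y, hX, hY, d, hd0, hB, hsq⟩ := exists_svd B
  have htr : ((Matrix.posSemidef_conjTranspose_mul_self B).sqrt.trace).re = ∑ i, d i := by
    rw [hsq, trace_conj_diag Y hY d]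
    rw [Complex.re_sum]
    simp
  rw [htr]
  conv_lhs => rw [hB]
  set M : Matrix (Fin n) (Fin n) ℂ := Yᴴ * V * X with hM
  have hMu : M ∈ Matrix.unitaryGroup (Fin n) ℂ :=
    mul_mem (mul_mem (Unitary.star_mem hY) hV) hX
  have h2 : (V * (X * Matrix.diagonal (fun i => (d i : ℂ)) * Yᴴ)).trace
      = (M * Matrix.diagonal (fun i => (d i : ℂ))).trace := by
    rw [hM]
    rw [← Matrix.mul_assoc, ← Matrix.mul_assoc, Matrix.trace_mul_cycle]
    simp only [Matrix.mul_assoc]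
  rw [h2]
  have h3 : (M * Matrix.diagonal (fun i => (d i : ℂ))).trace = ∑ i, M i i * (d i : ℂ) := by
    rw [Matrix.trace]
    apply Finset.sum_congr rfl
    intro i _
    rw [Matrix.diag_apply, Matrix.mul_diagonal]
  rw [h3]
  calc ‖∑ i, M i i * (d i : ℂ)‖ ≤ ∑ i, ‖M i i * (d i : ℂ)‖ := by
        exact norm_sum_le _ _
    _ ≤ ∑ i, d i := by
        apply Finset.sum_le_sum
        intro i _
        rw [norm_mul]
        have : ‖((d i : ℂ))‖ = d i := by
          rw [Complex.norm_of_nonneg (hd0 i)]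
        rw [this]
        calc ‖M i i‖ * d i ≤ 1 * d i :=
              mul_le_mul_of_nonneg_right (unitary_entry_le_one hMu i i) (hd0 i)
          _ = d i := one_mul _


lemma tnorm_real {n : ℕ} (B : Matrix (Fin n) (Fin n) ℂ) :
    (Matrix.posSemidef_conjTranspose_mul_self B).sqrt.trace
      = ((((Matrix.posSemidef_conjTranspose_mul_self B).sqrt.trace).re : ℝ) : ℂ)
    ∧ 0 ≤ ((Matrix.posSemidef_conjTranspose_mul_self B).sqrt.trace).re := by
  obtain ⟨X, Y, hX, hY, d, hd0, hB, hsq⟩ := exists_svd B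
  rw [hsq, trace_conj_diag Y hY d]
  have h1 : (∑ i, ((d i : ℂ))) = ((∑ i, d i : ℝ) : ℂ) := by push_cast; rfl
  rw [h1]
  simp only [Complex.ofReal_re]
  exact ⟨trivial, Finset.sum_nonneg fun i _ => hd0 i⟩

noncomputable def toE {n : ℕ} (A : Matrix (Fin n) (Fin n) ℂ) :
    EuclideanSpace ℂ (Fin n × Fin n) := WithLp.toLp 2 (fun p => A p.1 p.2)

lemma toE_inner {n : ℕ} (A C : Matrix (Fin n) (Fin n) ℂ) :
    ⟪toE A, toE C⟫_ℂ = (Aᴴ * C).trace := by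
  rw [Matrix.trace]
  simp only [PiLp.inner_apply, RCLike.inner_apply, toE, PiLp.toLp_apply, Matrix.diag_apply, Matrix.mul_apply,
    Matrix.conjTranspose_apply]
  rw [Fintype.sum_prod_type]
  rw [Finset.sum_comm]
  exact Finset.sum_congr rfl fun _ _ => Finset.sum_congr rfl fun _ _ => mul_comm _ _

lemma toE_norm_one {n : ℕ} (A : Matrix (Fin n) (Fin n) ℂ)
    (h : (Aᴴ * A).trace = 1) : ‖toE A‖ = 1 := by
  have h1 : ‖toE A‖ ^ 2 = 1 := by
    rw [← inner_self_eq_norm_sq (𝕜 := ℂ), toE_inner, h]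
    simp
  rw [← Real.sqrt_sq (norm_nonneg (toE A)), h1, Real.sqrt_one]

lemma trace_conj_unitary {n : ℕ} (A V : Matrix (Fin n) (Fin n) ℂ)
    (hV : V ∈ Matrix.unitaryGroup (Fin n) ℂ) :
    ((A * V)ᴴ * (A * V)).trace = (Aᴴ * A).trace := by
  have hVV : V * Vᴴ = 1 := Matrix.mem_unitaryGroup_iff.mp hV
  rw [Matrix.conjTranspose_mul]
  calc (Vᴴ * Aᴴ * (A * V)).trace = (Vᴴ * (Aᴴ * A * V)).trace := by
        simp only [Matrix.mul_assoc]
    _ = ((Aᴴ * A * V) * Vᴴ).trace := by rw [Matrix.trace_mul_comm]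
    _ = (Aᴴ * A * (V * Vᴴ)).trace := by rw [Matrix.mul_assoc]
    _ = (Aᴴ * A).trace := by rw [hVV, mul_one]


lemma matSqrt_eq {n : ℕ} {A : Matrix (Fin n) (Fin n) ℂ} (hA : A.PosSemidef) :
    matSqrt A = hA.sqrt := dif_pos hA

lemma fid_sqrt_eq {n : ℕ} {ρ σ : Matrix (Fin n) (Fin n) ℂ}
    (hρ : ρ.PosSemidef) (hσ : σ.PosSemidef) :
    matSqrt (matSqrt ρ * σ * matSqrt ρ)
      = (Matrix.posSemidef_conjTranspose_mul_self (matSqrt σ * matSqrt ρ)).sqrt := by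
  have key : matSqrt ρ * σ * matSqrt ρ = (matSqrt σ * matSqrt ρ)ᴴ * (matSqrt σ * matSqrt ρ) := by
    rw [matSqrt_eq hρ, matSqrt_eq hσ, Matrix.conjTranspose_mul,
      hρ.posSemidef_sqrt.1.eq, hσ.posSemidef_sqrt.1.eq]
    calc hρ.sqrt * σ * hρ.sqrt = hρ.sqrt * (hσ.sqrt * hσ.sqrt) * hρ.sqrt := by
          rw [hσ.sqrt_mul_self]
      _ = hρ.sqrt * hσ.sqrt * (hσ.sqrt * hρ.sqrt) := by simp only [Matrix.mul_assoc]
  rw [key, matSqrt_eq]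

theorem stmt0 {n : ℕ} (ρ σ ξ : Matrix (Fin n) (Fin n) ℂ)
    (hρ : ρ.PosSemidef) (hσ : σ.PosSemidef) (hξ : ξ.PosSemidef)
    (hρ1 : ρ.trace = 1) (hσ1 : σ.trace = 1) (hξ1 : ξ.trace = 1) :
    fid ρ σ ^ 2 + fid σ ξ ^ 2 ≤ 1 + fid ρ ξ := by
  have hxe : (Matrix.posSemidef_conjTranspose_mul_self (matSqrt σ * matSqrt ρ)).sqrt.trace
      = ((fid ρ σ : ℝ) : ℂ) := by
    rw [fid, fid_sqrt_eq hρ hσ]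
    exact (tnorm_real (matSqrt σ * matSqrt ρ)).1
  have hye : (Matrix.posSemidef_conjTranspose_mul_self (matSqrt ξ * matSqrt σ)).sqrt.trace
      = ((fid σ ξ : ℝ) : ℂ) := by
    rw [fid, fid_sqrt_eq hσ hξ]
    exact (tnorm_real (matSqrt ξ * matSqrt σ)).1
  have hze : (Matrix.posSemidef_conjTranspose_mul_self (matSqrt ξ * matSqrt ρ)).sqrt.trace
      = ((fid ρ ξ : ℝ) : ℂ) := by
    rw [fid, fid_sqrt_eq hρ hξ]
    exact (tnorm_real (matSqrt ξ * matSqrt ρ)).1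
  set x := fid ρ σ with hxdef
  set y := fid σ ξ with hydef
  set z := fid ρ ξ with hzdef
  set R := matSqrt ρ with hRdef
  set S := matSqrt σ with hSdef
  set T := matSqrt ξ with hTdef
  have hRH : Rᴴ = R := by rw [hRdef, matSqrt_eq hρ]; exact hρ.posSemidef_sqrt.1.eq
  have hSH : Sᴴ = S := by rw [hSdef, matSqrt_eq hσ]; exact hσ.posSemidef_sqrt.1.eq
  have hTH : Tᴴ = T := by rw [hTdef, matSqrt_eq hξ]; exact hξ.posSemidef_sqrt.1.eq
  have hRR : R * R = ρ := by rw [hRdef, matSqrt_eq hρ]; exact hρ.sqrt_mul_self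
  have hSS : S * S = σ := by rw [hSdef, matSqrt_eq hσ]; exact hσ.sqrt_mul_self
  have hTT : T * T = ξ := by rw [hTdef, matSqrt_eq hξ]; exact hξ.sqrt_mul_self
  have hx0 : 0 ≤ x := by
    have := (tnorm_real (S * R)).2
    rwa [hxe, Complex.ofReal_re] at this
  have hy0 : 0 ≤ y := by
    have := (tnorm_real (T * S)).2
    rwa [hye, Complex.ofReal_re] at this
  have hz0 : 0 ≤ z := by
    have := (tnorm_real (T * R)).2
    rwa [hze, Complex.ofReal_re] at this
  obtain ⟨U, hU, hUtr⟩ := tnorm_exists (S * R)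
  obtain ⟨W, hW, hWtr⟩ := tnorm_exists (T * S)
  rw [hxe] at hUtr
  rw [hye] at hWtr
  have hWU : W * U ∈ Matrix.unitaryGroup (Fin n) ℂ := mul_mem hW hU
  set u := toE R with hudef
  set v := toE (S * U) with hvdef
  set w := toE (T * (W * U)) with hwdef
  have hUU : U * Uᴴ = 1 := Matrix.mem_unitaryGroup_iff.mp hU
  -- norms
  have hnu : ‖u‖ = 1 := by
    apply toE_norm_one
    rw [hRH, hRR, hρ1]
  have hnv : ‖v‖ = 1 := by
    apply toE_norm_one
    rw [trace_conj_unitary S U hU, hSH, hSS, hσ1]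
  have hnw : ‖w‖ = 1 := by
    apply toE_norm_one
    rw [trace_conj_unitary T (W * U) hWU, hTH, hTT, hξ1]
  -- inner products
  have hvu : ⟪v, u⟫_ℂ = ((x : ℝ) : ℂ) := by
    rw [hvdef, hudef, toE_inner, Matrix.conjTranspose_mul, hSH, Matrix.mul_assoc, hUtr]
  have hvw : ⟪v, w⟫_ℂ = ((y : ℝ) : ℂ) := by
    rw [hvdef, hwdef, toE_inner, Matrix.conjTranspose_mul, hSH]
    have h1 : Uᴴ * S * (T * (W * U)) = Uᴴ * (S * T * W * U) := by
      simp only [Matrix.mul_assoc]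
    rw [h1, Matrix.trace_mul_comm, Matrix.mul_assoc (S * T * W) U Uᴴ, hUU, mul_one]
    have h2 : S * T * W = (Wᴴ * (T * S))ᴴ := by
      rw [Matrix.conjTranspose_mul, Matrix.conjTranspose_mul, Matrix.conjTranspose_conjTranspose,
        hSH, hTH, Matrix.mul_assoc]
    rw [h2, Matrix.trace_conjTranspose, hWtr]
    simp
  have hz_bound : ‖⟪u, w⟫_ℂ‖ ≤ z := by
    rw [hudef, hwdef, toE_inner, hRH]
    have h1 : R * (T * (W * U)) = ((W * U)ᴴ * (T * R))ᴴ := by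
      rw [Matrix.conjTranspose_mul ((W * U)ᴴ) (T * R), Matrix.conjTranspose_conjTranspose,
        Matrix.conjTranspose_mul T R, hRH, hTH]
      simp only [Matrix.mul_assoc]
    rw [h1, Matrix.trace_conjTranspose]
    have h2 := tnorm_bound (T * R) ((W * U)ᴴ) (Unitary.star_mem hWU)
    rw [hze, Complex.ofReal_re] at h2
    calc ‖star ((W * U)ᴴ * (T * R)).trace‖
        = ‖((W * U)ᴴ * (T * R)).trace‖ := by
          rw [norm_star]
      _ ≤ z := h2
  have hx1 : x ≤ 1 := by
    have h1 : ‖⟪v, u⟫_ℂ‖ ≤ 1 := by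
      calc ‖⟪v, u⟫_ℂ‖ ≤ ‖v‖ * ‖u‖ := norm_inner_le_norm v u
        _ = 1 := by rw [hnu, hnv, mul_one]
    rw [hvu, Complex.norm_of_nonneg hx0] at h1
    exact h1
  have hy1 : y ≤ 1 := by
    have h1 : ‖⟪v, w⟫_ℂ‖ ≤ 1 := by
      calc ‖⟪v, w⟫_ℂ‖ ≤ ‖v‖ * ‖w‖ := norm_inner_le_norm v w
        _ = 1 := by rw [hnv, hnw, mul_one]
    rw [hvw, Complex.norm_of_nonneg hy0] at h1
    exact h1
  have hkey := inner_ineq u v w hnu hnv hnw hx0 hy0 hvu hvw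
  exact scalar_key hx0 hx1 hy0 hy1 hz0 (le_trans hkey hz_bound)
end

section
/- Let H be a finite-dimensional complex inner product space, let α and β be unit vectors, let U₀, U₁ be unitaries on H, and let ψ be a unit vector. Then (1/2)(|⟨U₀† α, ψ⟩|² + |⟨U₁† β, ψ⟩|²) ≤ (1/2)(1 + |⟨α, U₀ U₁† β⟩|). -/
open scoped ComplexInnerProductSpace in
lemma key_ineq {H : Type*} [NormedAddCommGroup H] [InnerProductSpace ℂ H]
    (a b ψ : H) (ha : ‖a‖ = 1) (hb : ‖b‖ = 1) (hψ : ‖ψ‖ = 1) :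
    ‖inner (𝕜 := ℂ) a ψ‖ ^ 2 + ‖inner (𝕜 := ℂ) b ψ‖ ^ 2
      ≤ 1 + ‖inner (𝕜 := ℂ) a b‖ := by
  set x : ℂ := inner (𝕜 := ℂ) a ψ with hx
  set y : ℂ := inner (𝕜 := ℂ) b ψ with hy
  set v : H := x • a + y • b with hv
  set S : ℝ := ‖x‖ ^ 2 + ‖y‖ ^ 2 with hS
  set t : ℝ := ‖inner (𝕜 := ℂ) a b‖ with ht
  have ht0 : 0 ≤ t := norm_nonneg _
  have hS0 : 0 ≤ S := by positivity
  -- ⟨v, ψ⟩ = |x|^2 + |y|^2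
  have h1 : inner (𝕜 := ℂ) v ψ = (S : ℂ) := by
    simp [hv, inner_add_left, inner_smul_left, ← hx, ← hy, hS]
    rw [Complex.mul_conj', Complex.mul_conj']
  have hSv : S ≤ ‖v‖ := by
    have := norm_inner_le_norm (𝕜 := ℂ) v ψ
    rw [h1, hψ, mul_one] at this
    exact le_trans (le_abs_self S) (by simpa using this)
  -- ‖v‖^2 ≤ S * (1 + t)
  have h2 : ‖v‖ ^ 2 ≤ S * (1 + t) := by
    have hexp : ‖v‖ ^ 2 = ‖x • a‖ ^ 2 + 2 * Complex.re (inner (𝕜 := ℂ) (x • a) (y • b))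
        + ‖y • b‖ ^ 2 := norm_add_sq (𝕜 := ℂ) _ _
    have hna : ‖x • a‖ ^ 2 = ‖x‖ ^ 2 := by
      rw [norm_smul, ha, mul_one]
    have hnb : ‖y • b‖ ^ 2 = ‖y‖ ^ 2 := by
      rw [norm_smul, hb, mul_one]
    have hre : Complex.re (inner (𝕜 := ℂ) (x • a) (y • b))
        ≤ ‖x‖ * ‖y‖ * t := by
      have h3 : Complex.re (inner (𝕜 := ℂ) (x • a) (y • b))
          ≤ ‖inner (𝕜 := ℂ) (x • a) (y • b)‖ := Complex.re_le_norm _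
      have h4 : ‖inner (𝕜 := ℂ) (x • a) (y • b)‖
          = ‖x‖ * ‖y‖ * t := by
        rw [inner_smul_left, inner_smul_right]
        simp [ht, map_mul]
        ring
      linarith
    have hxy : 2 * (‖x‖ * ‖y‖) ≤ S := by
      have := sq_nonneg (‖x‖ - ‖y‖)
      nlinarith
    have : ‖v‖ ^ 2 ≤ S + 2 * (‖x‖ * ‖y‖) * t := by
      rw [hexp, hna, hnb]; nlinarith
    nlinarith [mul_le_mul_of_nonneg_right hxy ht0]
  have hnv : 0 ≤ ‖v‖ := norm_nonneg _
  nlinarith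

theorem stmt10 {H : Type*} [NormedAddCommGroup H] [InnerProductSpace ℂ H]
    [FiniteDimensional ℂ H]
    (U₀ U₁ : H →ₗ[ℂ] H)
    (hU01 : LinearMap.adjoint U₀ ∘ₗ U₀ = 1) (hU02 : U₀ ∘ₗ LinearMap.adjoint U₀ = 1)
    (hU11 : LinearMap.adjoint U₁ ∘ₗ U₁ = 1) (hU12 : U₁ ∘ₗ LinearMap.adjoint U₁ = 1)
    (α β ψ : H) (hα : ‖α‖ = 1) (hβ : ‖β‖ = 1) (hψ : ‖ψ‖ = 1) :
    (1 / 2) * (‖inner (𝕜 := ℂ) (LinearMap.adjoint U₀ α) ψ‖ ^ 2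
        + ‖inner (𝕜 := ℂ) (LinearMap.adjoint U₁ β) ψ‖ ^ 2)
      ≤ (1 / 2) * (1 + ‖inner (𝕜 := ℂ) α (U₀ (LinearMap.adjoint U₁ β))‖) := by
  have key : ∀ (U : H →ₗ[ℂ] H), U ∘ₗ LinearMap.adjoint U = 1 → ∀ z : H, ‖z‖ = 1 →
      ‖LinearMap.adjoint U z‖ = 1 := by
    intro U hU z hz
    have h : inner (𝕜 := ℂ) (LinearMap.adjoint U z) (LinearMap.adjoint U z)
        = inner (𝕜 := ℂ) z z := by
      have huz : U (LinearMap.adjoint U z) = z := by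
        have := congrArg (fun f => f z) hU
        simpa using this
      rw [LinearMap.adjoint_inner_left, huz]
    have h2 : ‖LinearMap.adjoint U z‖ ^ 2 = ‖z‖ ^ 2 := by
      rw [← @inner_self_eq_norm_sq ℂ, ← @inner_self_eq_norm_sq ℂ]
      exact congrArg RCLike.re h
    nlinarith [norm_nonneg (LinearMap.adjoint U z)]
  have ha : ‖LinearMap.adjoint U₀ α‖ = 1 := key U₀ hU02 α hα
  have hb : ‖LinearMap.adjoint U₁ β‖ = 1 := key U₁ hU12 β hβ
  have hinner : inner (𝕜 := ℂ) α (U₀ (LinearMap.adjoint U₁ β))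
      = inner (𝕜 := ℂ) (LinearMap.adjoint U₀ α) (LinearMap.adjoint U₁ β) := by
    rw [LinearMap.adjoint_inner_left]
  rw [hinner]
  have := key_ineq (LinearMap.adjoint U₀ α) (LinearMap.adjoint U₁ β) ψ ha hb hψ
  linarith
end
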